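/- arXiv:math/0603386 — 3 statements merged into one kernel-verified Lean document; each statement's English description precedes it below -/
import Mathlib

section
/- Let R be a commutative ℚ-algebra, A an associative unital R-algebra, C a maximal commutative R-subalgebra of A, and M an A-bimodule symmetric over R. Then the differential hull D^C M := ⋃_{p ≥ 0} F^C_p M is stable under left and right multiplication by elements of the differential hull D^C A := ⋃_{p ≥ 0} F^C_p A; i.e., for a ∈ D^C A and m ∈ D^C M, both a·m and m·a lie in D^C M. -/
/- STATEMENT 10: Over a commutative `ℚ`-algebra `R`, with `C` maximal commutative in `A`
and `M` an `A`-bimodule symmetric over `R`: the differential hull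
`D^C M = ⋃_p F^C_p M` is stable under left and right multiplication by elements of
`D^C A = ⋃_p F^C_p A`. -/

variable {R A M : Type*} [CommRing R] [Algebra ℚ R] [Ring A] [Algebra R A]
  [AddCommGroup M] [Module A M] [Module Aᵐᵒᵖ M] [SMulCommClass A Aᵐᵒᵖ M]
  [Module R M] [IsScalarTower R A M] [IsScalarTower R Aᵐᵒᵖ M]

/-- `ad_a(m) = a·m − m·a` on the bimodule `M`. -/
def adM (a : A) (m : M) : M := a • m - MulOpposite.op a • m

/-- `ad_c(a) = ca − ac` on the algebra `A`. -/
def adA (c a : A) : A := c * a - a * c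

lemma adM_zero (c : A) : adM c (0 : M) = 0 := by simp [adM]

lemma adM_add (c : A) (x y : M) : adM c (x + y) = adM c x + adM c y := by
  simp [adM, smul_add]; abel

lemma adM_iter_zero (c : A) (n : ℕ) : (adM c)^[n] (0 : M) = 0 := by
  induction n with
  | zero => rfl
  | succ n ih => rw [Function.iterate_succ_apply, adM_zero, ih]

lemma adM_iter_add (c : A) (n : ℕ) (x y : M) :
    (adM c)^[n] (x + y) = (adM c)^[n] x + (adM c)^[n] y := by
  induction n generalizing x y with
  | zero => rfl
  | succ n ih => rw [Function.iterate_succ_apply, adM_add, ih,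
      Function.iterate_succ_apply, Function.iterate_succ_apply]

lemma adM_smul (c a : A) (m : M) :
    adM c (a • m) = (adA c a) • m + a • adM c m := by
  simp only [adM, adA, sub_smul, mul_smul, smul_sub]
  rw [← smul_comm a (MulOpposite.op c) m]
  abel

lemma adM_op_smul (c a : A) (m : M) :
    adM c (MulOpposite.op a • m) =
      MulOpposite.op (adA c a) • m + MulOpposite.op a • adM c m := by
  simp only [adM, adA, MulOpposite.op_sub, MulOpposite.op_mul, sub_smul, mul_smul, smul_sub]
  rw [smul_comm c (MulOpposite.op a) m]
  abel

lemma key_left (c : A) : ∀ n p q (a : A) (m : M), p + q = n →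
    (adA c)^[p + 1] a = 0 → (adM c)^[q + 1] m = 0 →
    (adM c)^[p + q + 1] (a • m) = 0 := by
  intro n
  induction n with
  | zero =>
    intro p q a m hpq ha hm
    obtain ⟨rfl, rfl⟩ := Nat.add_eq_zero.mp hpq
    simp only [zero_add, Function.iterate_one] at ha hm ⊢
    rw [adM_smul, ha, hm, zero_smul, smul_zero, add_zero]
  | succ n ih =>
    intro p q a m hpq ha hm
    rw [Function.iterate_succ_apply, adM_smul, adM_iter_add]
    have h1 : (adM c)^[p + q] ((adA c a) • m) = 0 := by
      cases p with
      | zero =>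
        have : adA c a = 0 := ha
        rw [this, zero_smul, adM_iter_zero]
      | succ p' =>
        have := ih p' q (adA c a) m (by omega)
          (by rw [← Function.iterate_succ_apply]; exact ha) hm
        simpa [Nat.add_right_comm] using this
    have h2 : (adM c)^[p + q] (a • adM c m) = 0 := by
      cases q with
      | zero =>
        have : adM c m = 0 := hm
        rw [this, smul_zero, adM_iter_zero]
      | succ q' =>
        have := ih p q' a (adM c m) (by omega) ha
          (by rw [← Function.iterate_succ_apply]; exact hm)
        rw [← Nat.add_assoc]; exact this
    rw [h1, h2, add_zero]

lemma key_right (c : A) : ∀ n p q (a : A) (m : M), p + q = n →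
    (adA c)^[p + 1] a = 0 → (adM c)^[q + 1] m = 0 →
    (adM c)^[p + q + 1] (MulOpposite.op a • m) = 0 := by
  intro n
  induction n with
  | zero =>
    intro p q a m hpq ha hm
    obtain ⟨rfl, rfl⟩ := Nat.add_eq_zero.mp hpq
    simp only [zero_add, Function.iterate_one] at ha hm ⊢
    rw [adM_op_smul, ha, hm, MulOpposite.op_zero, zero_smul, smul_zero, add_zero]
  | succ n ih =>
    intro p q a m hpq ha hm
    rw [Function.iterate_succ_apply, adM_op_smul, adM_iter_add]
    have h1 : (adM c)^[p + q] (MulOpposite.op (adA c a) • m) = 0 := by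
      cases p with
      | zero =>
        have : adA c a = 0 := ha
        rw [this, MulOpposite.op_zero, zero_smul, adM_iter_zero]
      | succ p' =>
        have := ih p' q (adA c a) m (by omega)
          (by rw [← Function.iterate_succ_apply]; exact ha) hm
        simpa [Nat.add_right_comm] using this
    have h2 : (adM c)^[p + q] (MulOpposite.op a • adM c m) = 0 := by
      cases q with
      | zero =>
        have : adM c m = 0 := hm
        rw [this, smul_zero, adM_iter_zero]
      | succ q' =>
        have := ih p q' a (adM c m) (by omega) ha
          (by rw [← Function.iterate_succ_apply]; exact hm)
        rw [← Nat.add_assoc]; exact this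
    rw [h1, h2, add_zero]

theorem differentialHull_bimodule_stable (C : Subalgebra R A)
    (hC : ∀ x ∈ C, ∀ y ∈ C, x * y = y * x)
    (hmax : ∀ a : A, (∀ c ∈ C, c * a = a * c) → a ∈ C)
    (a : A) (ha : ∃ p : ℕ, ∀ c ∈ C, (adA c)^[p + 1] a = 0)
    (m : M) (hm : ∃ p : ℕ, ∀ c ∈ C, (adM c)^[p + 1] m = 0) :
    (∃ p : ℕ, ∀ c ∈ C, (adM c)^[p + 1] (a • m) = 0) ∧
    (∃ p : ℕ, ∀ c ∈ C, (adM c)^[p + 1] (MulOpposite.op a • m) = 0) := by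
  obtain ⟨p, ha⟩ := ha
  obtain ⟨q, hm⟩ := hm
  exact ⟨⟨p + q, fun c hc => key_left c (p + q) p q a m rfl (ha c hc) (hm c hc)⟩,
    ⟨p + q, fun c hc => key_right c (p + q) p q a m rfl (ha c hc) (hm c hc)⟩⟩
end

section
/- Let R be a commutative ℚ-algebra, A an associative unital R-algebra, and C a maximal commutative R-subalgebra of A. Let a ∈ F^C_p A with p ≥ 1. Then for all c, c', c_2, …, c_p ∈ C one has ad_{c c'}(ad_{c_2}(⋯ ad_{c_p}(a)⋯)) = c · ad_{c'}(ad_{c_2}(⋯ ad_{c_p}(a)⋯)) + c' · ad_{c}(ad_{c_2}(⋯ ad_{c_p}(a)⋯)); i.e., the principal symbol of a, as a symmetric p-linear form on C with values in C, is a derivation in each argument. -/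
/- STATEMENT 12: Over a commutative `ℚ`-algebra `R`, with `C` maximal commutative in
`A`: for `a ∈ F^C_p A`, `p ≥ 1`, and `c, c', c_2, …, c_p ∈ C`,
`ad_{cc'}(ad_{c_2}(⋯ ad_{c_p}(a)⋯)) = c · ad_{c'}(ad_{c_2}(⋯)) + c' · ad_{c}(ad_{c_2}(⋯))`;
i.e. the principal symbol is a derivation in each argument. -/

variable {R A : Type*} [CommRing R] [Algebra ℚ R] [Ring A] [Algebra R A]

/-- Iterated adjoint `ad_{c_0}(ad_{c_1}(⋯ ad_{c_k}(a)⋯))` for a list `[c_0, …, c_k]`. -/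
def adIterA : List A → A → A
  | [], a => a
  | c :: l, a => adA c (adIterA l a)

/-- `ad_c` as a `ℤ`-linear endomorphism. -/
def adE (c : A) : Module.End ℤ A := LinearMap.mulLeft ℤ c - LinearMap.mulRight ℤ c

lemma adE_apply (c a : A) : adE c a = adA c a := rfl

lemma adE_coe (c : A) : ⇑(adE c) = adA c := funext fun a => rfl

lemma adE_pow_apply (c : A) (n : ℕ) (x : A) : ((adE c) ^ n) x = (adA c)^[n] x := by
  rw [Module.End.pow_apply, adE_coe]

lemma adE_add (c d : A) : adE (c + d) = adE c + adE d := by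
  ext a
  simp only [adE, LinearMap.sub_apply, LinearMap.mulLeft_apply, LinearMap.mulRight_apply,
    LinearMap.add_apply, add_mul, mul_add]
  abel

lemma adE_nsmul (k : ℕ) (c : A) : adE (k • c) = k • adE c := by
  ext a
  simp only [adE, LinearMap.sub_apply, LinearMap.mulLeft_apply, LinearMap.mulRight_apply,
    LinearMap.smul_apply, smul_mul_assoc, mul_smul_comm, smul_sub]

lemma adE_comm {c c' : A} (h : c * c' = c' * c) : Commute (adE c) (adE c') := by
  have : ∀ a : A, adE c (adE c' a) = adE c' (adE c a) := by
    intro a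
    simp only [adE_apply, adA, mul_sub, sub_mul, mul_assoc]
    rw [← mul_assoc c c' a, h, mul_assoc]
    abel
  exact LinearMap.ext fun a => by
    simpa only [Module.End.mul_apply] using this a

/-- In a `ℚ`-algebra setting, `A` is `ℤ`-torsion-free. -/
lemma int_smul_cancel (R : Type*) [CommRing R] [Algebra ℚ R] [Algebra R A] {n : ℤ} (hn : n ≠ 0) {x : A} (h : n • x = 0) : x = 0 := by
  have h1 : ((n : R)) • x = 0 := by rw [Int.cast_smul_eq_zsmul, h]
  have h2 : (algebraMap ℚ R ((n : ℚ)⁻¹)) • ((n : R) • x) = 0 := by rw [h1, smul_zero]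
  rw [smul_smul] at h2
  have h3 : algebraMap ℚ R ((n : ℚ)⁻¹) * (n : R) = 1 := by
    have : ((n : ℤ) : R) = algebraMap ℚ R ((n : ℤ) : ℚ) := by
      simp [map_intCast]
    rw [this, ← map_mul, inv_mul_cancel₀ (by exact_mod_cast hn), map_one]
  rw [h3, one_smul] at h2
  exact h2

/-- Vandermonde cancellation: if `∑_j k^j • w j = 0` for `k = 0, …, m`, then all `w j = 0`. -/
lemma vandermonde_kill (R : Type*) [CommRing R] [Algebra ℚ R] [Algebra R A] (m : ℕ) (w : ℕ → A)
    (h : ∀ k ≤ m, ∑ j ∈ Finset.range (m + 1), ((k : ℤ) ^ j) • w j = 0) :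
    ∀ j ≤ m, w j = 0 := by
  set n := m + 1 with hn
  set M : Matrix (Fin n) (Fin n) ℤ := Matrix.vandermonde (fun i => (i : ℤ)) with hM
  have hdet : M.det ≠ 0 := by
    rw [hM, Matrix.det_vandermonde]
    apply Finset.prod_ne_zero_iff.2
    intro i _
    apply Finset.prod_ne_zero_iff.2
    intro j hj
    have : i < j := Finset.mem_Ioi.1 hj
    have : (i : ℤ) < (j : ℤ) := by exact_mod_cast this
    omega
  have key : ∀ k : Fin n, ∑ j : Fin n, M k j • w (j : ℕ) = 0 := by
    intro k
    have := h k (Nat.lt_succ_iff.1 k.isLt)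
    rw [← Fin.sum_univ_eq_sum_range (fun j => ((k : ℤ) ^ j) • w j) n] at this
    simpa [hM, Matrix.vandermonde] using this
  intro j hj
  have hjn : j < n := Nat.lt_succ_of_le hj
  set i : Fin n := ⟨j, hjn⟩ with hi
  have h0 : ∑ k : Fin n, M.adjugate i k • (∑ l : Fin n, M k l • w (l : ℕ)) = 0 := by
    apply Finset.sum_eq_zero
    intro k _
    rw [key k, smul_zero]
  have h1 : ∑ k : Fin n, M.adjugate i k • (∑ l : Fin n, M k l • w (l : ℕ))
      = ∑ l : Fin n, ((M.adjugate * M) i l) • w (l : ℕ) := by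
    simp only [Finset.smul_sum, smul_smul, Matrix.mul_apply, Finset.sum_smul]
    rw [Finset.sum_comm]
  have h2 : ∑ l : Fin n, ((M.adjugate * M) i l) • w (l : ℕ) = M.det • w (i : ℕ) := by
    rw [Matrix.adjugate_mul]
    rw [Finset.sum_eq_single i]
    · simp [Matrix.one_apply]
    · intro b _ hb
      simp [Matrix.one_apply, (Ne.symm hb)]
    · intro hmem; exact absurd (Finset.mem_univ i) hmem
  have hfin : M.det • w j = 0 := by
    have := (h1.symm.trans h0).symm.trans h2
    simpa [hi] using this.symm
  exact int_smul_cancel R hdet hfin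

section Main

variable (C : Subalgebra R A)

/-- Two-variable polarization: mixed adjoint powers kill `x`. -/
lemma mixed_kill (hC : ∀ x ∈ C, ∀ y ∈ C, x * y = y * x)
    {c c' : A} (hc : c ∈ C) (hc' : c' ∈ C) (m : ℕ) (x : A)
    (hx : ∀ e ∈ C, (adA e)^[m] x = 0) :
    ∀ j ≤ m, (((adE c') ^ j * (adE c) ^ (m - j)) : Module.End ℤ A) x = 0 := by
  set S := adE c' with hS
  set T := adE c with hT
  have hcomm : Commute S T := adE_comm (hC c' hc' c hc)
  set w : ℕ → A := fun j => ((m.choose j : ℤ)) • ((S ^ j * T ^ (m - j)) x) with hw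
  have hsum : ∀ k ≤ m, ∑ j ∈ Finset.range (m + 1), ((k : ℤ) ^ j) • w j = 0 := by
    intro k hk
    have hmem : c + k • c' ∈ C := C.add_mem hc (nsmul_mem hc' k)
    have hzero : ((adE (c + k • c')) ^ m) x = 0 := by
      rw [adE_pow_apply]; exact hx _ hmem
    have hEq : adE (c + k • c') = k • S + T := by
      rw [adE_add, adE_nsmul, add_comm]
    rw [hEq] at hzero
    have hcomm2 : Commute (k • S) T := hcomm.smul_left k
    rw [hcomm2.add_pow m] at hzero
    calc ∑ j ∈ Finset.range (m + 1), ((k : ℤ) ^ j) • w j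
        = ∑ j ∈ Finset.range (m + 1),
            (((k • S) ^ j * T ^ (m - j) * (m.choose j : Module.End ℤ A)) x) := by
          apply Finset.sum_congr rfl
          intro j _
          rw [hw, smul_pow]
          simp only [Module.End.mul_apply, Module.End.natCast_apply,
            LinearMap.smul_apply, map_nsmul]
          rw [natCast_zsmul, ← Nat.cast_pow, natCast_zsmul]
          exact smul_comm _ _ _
      _ = ((∑ j ∈ Finset.range (m + 1), (k • S) ^ j * T ^ (m - j) * (m.choose j : Module.End ℤ A)) x) := by
          rw [LinearMap.coe_sum, Finset.sum_apply]
      _ = 0 := by rw [← hzero]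
  intro j hj
  have := vandermonde_kill R m w hsum j hj
  rw [hw] at this
  exact int_smul_cancel R (by exact_mod_cast (Nat.choose_pos hj).ne') this

/-- Descent: if all `(p+1)`-st single powers of adjoints kill `x`, then after applying one
adjoint, `q`-th powers kill the result. -/
lemma descent (hC : ∀ x ∈ C, ∀ y ∈ C, x * y = y * x)
    (q : ℕ) (x : A) (hx : ∀ e ∈ C, (adA e)^[q + 1] x = 0)
    {c : A} (hc : c ∈ C) {e : A} (he : e ∈ C) :
    (adA e)^[q] (adA c x) = 0 := by
  have := mixed_kill C hC hc he (q + 1) x hx q (Nat.le_succ q)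
  have h2 : (q + 1) - q = 1 := by omega
  rw [h2, pow_one] at this
  rw [Module.End.mul_apply] at this
  rw [← adE_pow_apply, ← adE_apply]
  exact this

lemma iter_kill (hC : ∀ x ∈ C, ∀ y ∈ C, x * y = y * x) :
    ∀ (l : List A), (∀ y ∈ l, y ∈ C) → ∀ (q : ℕ) (x : A),
      (∀ e ∈ C, (adA e)^[q + l.length] x = 0) →
      ∀ e ∈ C, (adA e)^[q] (adIterA l x) = 0 := by
  intro l
  induction l with
  | nil =>
      intro _ q x hx e he
      simpa [adIterA] using hx e he
  | cons d l ih =>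
      intro hl q x hx e he
      have hd : d ∈ C := hl d List.mem_cons_self
      have hx' : ∀ e ∈ C, (adA e)^[(q + 1) + l.length] x = 0 := by
        intro e he
        have : (q + 1) + l.length = q + (d :: l).length := by simp; omega
        rw [this]; exact hx e he
      have hIH : ∀ e ∈ C, (adA e)^[q + 1] (adIterA l x) = 0 :=
        ih (fun y hy => hl y (List.mem_cons_of_mem d hy)) (q + 1) x hx'
      show (adA e)^[q] (adA d (adIterA l x)) = 0
      exact descent C hC q (adIterA l x) hIH hd he

end Main

theorem principal_symbol_is_derivation (C : Subalgebra R A)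
    (hC : ∀ x ∈ C, ∀ y ∈ C, x * y = y * x)
    (hmax : ∀ a : A, (∀ c ∈ C, c * a = a * c) → a ∈ C)
    (p : ℕ) (hp : 1 ≤ p) (a : A)
    (ha : ∀ c ∈ C, (adA c)^[p + 1] a = 0)
    (c c' : A) (hcC : c ∈ C) (hc'C : c' ∈ C)
    (cs : Fin (p - 1) → A) (hcs : ∀ i, cs i ∈ C) :
    adA (c * c') (adIterA (List.ofFn cs) a) =
      c * adA c' (adIterA (List.ofFn cs) a) +
        c' * adA c (adIterA (List.ofFn cs) a) := by
  set b := adIterA (List.ofFn cs) a with hb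
  have hlmem : ∀ y ∈ List.ofFn cs, y ∈ C := by
    intro y hy
    rcases List.mem_ofFn.1 hy with ⟨i, rfl⟩
    exact hcs i
  have hlen : (List.ofFn cs).length = p - 1 := List.length_ofFn
  have hb2 : ∀ e ∈ C, (adA e)^[2] b = 0 := by
    apply iter_kill C hC (List.ofFn cs) hlmem 2 a
    intro e he
    have : 2 + (List.ofFn cs).length = p + 1 := by rw [hlen]; omega
    rw [this]; exact ha e he
  have h1 : adA c' (adA c b) = 0 := by
    have := descent C hC 1 b hb2 hcC hc'C
    simpa using this
  simp only [adA] at h1 ⊢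
  have hswap : c' * (c * b - b * c) = (c * b - b * c) * c' := sub_eq_zero.mp h1
  rw [hswap]
  noncomm_ring
end

section
/- Let R be a commutative ℚ-algebra, A an associative unital R-algebra, and C a maximal commutative R-subalgebra of A. For a ∈ F^C_{p₀} A, a' ∈ F^C_{p₁} A and any c ∈ C one has ad_c^{p₀+p₁}(a·a') = binom(p₀+p₁, p₀) · ad_c^{p₀}(a) · ad_c^{p₁}(a'); i.e., the principal symbol of a product is the product of the principal symbols (up to the binomial normalization). -/
/- STATEMENT 13: Over a commutative `ℚ`-algebra `R`, with `C` maximal commutative in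
`A`: for `a ∈ F^C_{p₀} A`, `a' ∈ F^C_{p₁} A` and `c ∈ C`,
`ad_c^{p₀+p₁}(a·a') = binom(p₀+p₁, p₀) · ad_c^{p₀}(a) · ad_c^{p₁}(a')`. -/

variable {R A : Type*} [CommRing R] [Algebra ℚ R] [Ring A] [Algebra R A]

lemma adA_zero (c : A) : adA c 0 = 0 := by simp [adA]

lemma adA_add (c x y : A) : adA c (x + y) = adA c x + adA c y := by
  simp only [adA]; noncomm_ring

lemma adA_nsmul (c : A) (n : ℕ) (x : A) : adA c (n • x) = n • adA c x := by
  simp only [adA, smul_sub, mul_smul_comm, smul_mul_assoc]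

lemma adA_mul (c x y : A) : adA c (x * y) = adA c x * y + x * adA c y := by
  simp only [adA]; noncomm_ring

lemma adA_sum (c : A) {ι : Type*} (s : Finset ι) (f : ι → A) :
    adA c (∑ i ∈ s, f i) = ∑ i ∈ s, adA c (f i) := by
  classical
  induction s using Finset.induction with
  | empty => simp [adA]
  | insert _ _ h ih => simp [Finset.sum_insert h, adA_add, ih]

open Finset in
lemma adA_iterate_mul (c : A) (n : ℕ) (p q : A) :
    (adA c)^[n] (p * q) =
      ∑ k ∈ range n.succ, (n.choose k • ((adA c)^[n - k] p * (adA c)^[k] q)) := by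
  induction n with
  | zero => simp [Finset.range]
  | succ n IH =>
    calc
      (adA c)^[n + 1] (p * q) =
          adA c (∑ k ∈ range n.succ,
              n.choose k • ((adA c)^[n - k] p * (adA c)^[k] q)) := by
        rw [Function.iterate_succ_apply', IH]
      _ = (∑ k ∈ range n.succ,
            n.choose k • ((adA c)^[n - k + 1] p * (adA c)^[k] q)) +
          ∑ k ∈ range n.succ,
            n.choose k • ((adA c)^[n - k] p * (adA c)^[k + 1] q) := by
        rw [adA_sum]
        simp_rw [adA_nsmul, adA_mul, Function.iterate_succ_apply',
          smul_add, sum_add_distrib]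
      _ = (∑ k ∈ range n.succ,
                n.choose k.succ • ((adA c)^[n - k] p * (adA c)^[k + 1] q)) +
              1 • ((adA c)^[n + 1] p * (adA c)^[0] q) +
            ∑ k ∈ range n.succ, n.choose k • ((adA c)^[n - k] p * (adA c)^[k + 1] q) :=
        ?_
      _ = ((∑ k ∈ range n.succ, n.choose k • ((adA c)^[n - k] p * (adA c)^[k + 1] q)) +
              ∑ k ∈ range n.succ,
                n.choose k.succ • ((adA c)^[n - k] p * (adA c)^[k + 1] q)) +
            1 • ((adA c)^[n + 1] p * (adA c)^[0] q) := by
        rw [add_comm, add_assoc]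
      _ = (∑ i ∈ range n.succ,
              (n + 1).choose (i + 1) • ((adA c)^[n + 1 - (i + 1)] p * (adA c)^[i + 1] q)) +
            1 • ((adA c)^[n + 1] p * (adA c)^[0] q) := by
        simp_rw [Nat.choose_succ_succ, Nat.succ_sub_succ, add_smul, sum_add_distrib]
      _ = ∑ k ∈ range n.succ.succ,
            n.succ.choose k • ((adA c)^[n.succ - k] p * (adA c)^[k] q) := by
        rw [sum_range_succ' _ n.succ, Nat.choose_zero_right, tsub_zero]
    congr
    refine (sum_range_succ' _ _).trans (congr_arg₂ (· + ·) ?_ ?_)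
    · rw [sum_range_succ, Nat.choose_succ_self, zero_smul, add_zero]
      refine sum_congr rfl fun k hk => ?_
      rw [mem_range] at hk
      congr
      omega
    · rw [Nat.choose_zero_right, tsub_zero]

lemma adA_iterate_zero (c : A) (j : ℕ) : (adA c)^[j] (0 : A) = 0 := by
  induction j with
  | zero => rfl
  | succ j ih => rw [Function.iterate_succ_apply', ih, adA_zero]

lemma adA_iterate_eq_zero (c x : A) {m k : ℕ} (h : (adA c)^[m] x = 0) (hk : m ≤ k) :
    (adA c)^[k] x = 0 := by
  obtain ⟨j, rfl⟩ := Nat.exists_eq_add_of_le hk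
  rw [add_comm, Function.iterate_add_apply, h, adA_iterate_zero]

theorem principal_symbol_of_product (C : Subalgebra R A)
    (hC : ∀ x ∈ C, ∀ y ∈ C, x * y = y * x)
    (hmax : ∀ a : A, (∀ c ∈ C, c * a = a * c) → a ∈ C)
    (p₀ p₁ : ℕ) (a a' : A)
    (ha : ∀ c ∈ C, (adA c)^[p₀ + 1] a = 0)
    (ha' : ∀ c ∈ C, (adA c)^[p₁ + 1] a' = 0)
    (c : A) (hcC : c ∈ C) :
    (adA c)^[p₀ + p₁] (a * a') =
      (p₀ + p₁).choose p₀ • ((adA c)^[p₀] a * (adA c)^[p₁] a') := by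
  rw [adA_iterate_mul]
  rw [Finset.sum_eq_single p₁]
  · rw [Nat.add_sub_cancel, ← Nat.choose_symm (Nat.le_add_right p₀ p₁),
      Nat.add_sub_cancel_left]
  · intro k hk hne
    rcases lt_or_gt_of_ne hne with h | h
    · have : (adA c)^[p₀ + p₁ - k] a = 0 :=
        adA_iterate_eq_zero c a (ha c hcC) (by omega)
      rw [this, zero_mul, smul_zero]
    · have : (adA c)^[k] a' = 0 :=
        adA_iterate_eq_zero c a' (ha' c hcC) (by omega)
      rw [this, mul_zero, smul_zero]
  · intro h
    exact absurd (Finset.mem_range.mpr (by omega)) h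
end
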